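/- arXiv:1911.00618 — 3 statements merged into one kernel-verified Lean document; each statement's English description precedes it below -/
import Mathlib

section
/- Let φ be a continuous flow on a compact metric space M, let x ∈ M, and let σ be a fixed point of φ contained in ω(x) with ω(x) ≠ {σ}. Suppose there is ε > 0 such that every point z whose entire forward orbit stays in the open ball B_ε(σ) satisfies φ_t(z) → σ as t → ∞. Then there exists a point y ≠ σ with y ∈ ω(x) such that φ_t(y) ∈ closure(B_ε(σ)) for all t ≥ 0 and φ_t(y) → σ as t → ∞. -/
open Filter Topology

theorem stmt_5 {M : Type*} [MetricSpace M] [CompactSpace M]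
    (φ : ℝ → M → M)
    (hcont : Continuous fun p : ℝ × M => φ p.1 p.2)
    (h0 : ∀ x, φ 0 x = x)
    (hadd : ∀ t s x, φ (t + s) x = φ t (φ s x))
    (x σ : M) (hσ : ∀ t : ℝ, φ t σ = σ)
    (ω : M → Set M)
    (hω : ∀ p, ω p = {z | ∃ t : ℕ → ℝ, Tendsto t atTop atTop ∧
        Tendsto (fun n => φ (t n) p) atTop (𝓝 z)})
    (hσω : σ ∈ ω x) (hnt : ω x ≠ {σ})
    (ε : ℝ) (hε : 0 < ε)
    (hloc : ∀ z : M, (∀ t : ℝ, 0 ≤ t → φ t z ∈ Metric.ball σ ε) →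
        Tendsto (fun t : ℝ => φ t z) atTop (𝓝 σ)) :
    ∃ y : M, y ≠ σ ∧ y ∈ ω x ∧
      (∀ t : ℝ, 0 ≤ t → φ t y ∈ closure (Metric.ball σ ε)) ∧
      Tendsto (fun t : ℝ => φ t y) atTop (𝓝 σ) := by
  classical
  have hc1 : Continuous fun t : ℝ => φ t x :=
    hcont.comp (continuous_id.prodMk continuous_const)
  obtain ⟨w, hw, hwσ⟩ : ∃ w ∈ ω x, w ≠ σ := by
    by_contra h
    push_neg at h
    exact hnt (Set.eq_singleton_iff_unique_mem.2 ⟨hσω, h⟩)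
  rw [hω] at hσω hw
  obtain ⟨ts, hts, htsσ⟩ := hσω
  obtain ⟨ss, hss, hssw⟩ := hw
  have hr : 0 < dist w σ := dist_pos.2 hwσ
  set r := dist w σ with hrdef
  set δ := min (ε/2) (r/2) with hδdef
  have hδ0 : 0 < δ := lt_min (by linarith) (by linarith)
  have hδε : δ < ε := lt_of_le_of_lt (min_le_left _ _) (by linarith)
  have hδr : δ < r := lt_of_le_of_lt (min_le_right _ _) (by linarith)
  -- exit times b
  have hB : ∀ n : ℕ, ∃ bn : ℝ, (n : ℝ) ≤ bn ∧ δ ≤ dist (φ bn x) σ := by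
    intro n
    have h1 : ∀ᶠ m in atTop, (n : ℝ) ≤ ss m := hss.eventually_ge_atTop _
    have h2 : Tendsto (fun m => dist (φ (ss m) x) σ) atTop (𝓝 r) :=
      hssw.dist tendsto_const_nhds
    have h3 : ∀ᶠ m in atTop, δ < dist (φ (ss m) x) σ :=
      h2.eventually (eventually_gt_nhds hδr)
    obtain ⟨m, hm1, hm2⟩ := (h1.and h3).exists
    exact ⟨ss m, hm1, le_of_lt hm2⟩
  choose b hb1 hb2 using hB
  -- approach times a
  have hA : ∀ n : ℕ, ∃ an : ℝ, b n ≤ an ∧ dist (φ an x) σ < δ ∧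
      dist (φ an x) σ < 1 / (n + 1) := by
    intro n
    have h1 : ∀ᶠ k in atTop, b n ≤ ts k := hts.eventually_ge_atTop _
    have h2 : Tendsto (fun k => dist (φ (ts k) x) σ) atTop (𝓝 0) := by
      have := htsσ.dist (tendsto_const_nhds (x := σ))
      rwa [dist_self] at this
    have hpos : (0:ℝ) < min δ (1 / (n + 1)) := lt_min hδ0 (by positivity)
    have h3 : ∀ᶠ k in atTop, dist (φ (ts k) x) σ < min δ (1 / (n + 1)) :=
      h2.eventually (eventually_lt_nhds hpos)
    obtain ⟨k, hk1, hk2⟩ := (h1.and h3).exists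
    exact ⟨ts k, hk1, lt_of_lt_of_le hk2 (min_le_left _ _),
      lt_of_lt_of_le hk2 (min_le_right _ _)⟩
  choose a ha1 ha2 ha3 using hA
  -- last exit time u
  set S : ℕ → Set ℝ := fun n => {t | t ∈ Set.Icc (b n) (a n) ∧ δ ≤ dist (φ t x) σ}
    with hSdef
  have hSclosed : ∀ n, IsClosed (S n) := by
    intro n
    exact (isClosed_Icc.inter (isClosed_le continuous_const
      ((continuous_dist.comp (hc1.prodMk continuous_const)))))
  have hScpt : ∀ n, IsCompact (S n) := by
    intro n
    exact (isCompact_Icc.of_isClosed_subset (hSclosed n) (fun t ht => ht.1))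
  have hSne : ∀ n, (S n).Nonempty := fun n => ⟨b n, ⟨le_refl _, ha1 n⟩, hb2 n⟩
  set u : ℕ → ℝ := fun n => sSup (S n) with hudef
  have huS : ∀ n, u n ∈ S n := fun n => (hScpt n).sSup_mem (hSne n)
  have hbu : ∀ n, b n ≤ u n := fun n => (huS n).1.1
  have hua : ∀ n, u n ≤ a n := fun n => (huS n).1.2
  have hua' : ∀ n, u n < a n := by
    intro n
    rcases lt_or_eq_of_le (hua n) with h | h
    · exact h
    · exact absurd ((h ▸ (huS n).2 : δ ≤ dist (φ (a n) x) σ)) (not_le.2 (ha2 n))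
  have hbdd : ∀ n, BddAbove (S n) := fun n =>
    ⟨a n, fun t ht => ht.1.2⟩
  have hlt : ∀ n, ∀ s ∈ Set.Ioc (u n) (a n), dist (φ s x) σ < δ := by
    intro n s hs
    by_contra h
    push_neg at h
    have : s ∈ S n := ⟨⟨le_trans (hbu n) (le_of_lt hs.1), hs.2⟩, h⟩
    exact absurd (le_csSup (hbdd n) this) (not_le.2 hs.1)
  set y : ℕ → M := fun n => φ (u n) x with hydef
  have hyδ : ∀ n, dist (y n) σ = δ := by
    intro n
    refine le_antisymm ?_ (huS n).2
    have htend : Tendsto (fun s => dist (φ s x) σ) (𝓝[>] (u n)) (𝓝 (dist (y n) σ)) :=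
      ((continuous_dist.comp (hc1.prodMk continuous_const)).tendsto _).mono_left
        nhdsWithin_le_nhds
    refine le_of_tendsto htend ?_
    filter_upwards [Ioc_mem_nhdsGT_of_mem ⟨le_refl _, hua' n⟩] with s hs
    exact le_of_lt (hlt n s hs)
  have horbit : ∀ n, ∀ t : ℝ, 0 ≤ t → t ≤ a n - u n → dist (φ t (y n)) σ ≤ δ := by
    intro n t ht0 ht1
    have heq : φ t (y n) = φ (t + u n) x := (hadd t (u n) x).symm
    rw [heq]
    rcases eq_or_lt_of_le ht0 with h | h
    · rw [← h, zero_add]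
      exact le_of_eq (hyδ n)
    · exact le_of_lt (hlt n _ ⟨by linarith, by linarith⟩)
  -- times in ball tend to infinity
  set c : ℕ → ℝ := fun n => a n - u n with hcdef
  have hc0 : ∀ n, 0 ≤ c n := fun n => sub_nonneg.2 (hua n)
  have hcinf : Tendsto c atTop atTop := by
    by_contra hcon
    rw [tendsto_atTop] at hcon
    push_neg at hcon
    obtain ⟨C, hC⟩ := hcon
    change ∃ᶠ n in atTop, c n < C at hC
    obtain ⟨ψ, hψmono, hψ⟩ := Filter.extraction_of_frequently_atTop hC
    -- pairs in a compact set
    have hcpt : IsCompact ((Set.univ : Set M) ×ˢ Set.Icc (0:ℝ) C) :=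
      isCompact_univ.prod isCompact_Icc
    have hmem : ∀ k, (y (ψ k), c (ψ k)) ∈ (Set.univ : Set M) ×ˢ Set.Icc (0:ℝ) C :=
      fun k => ⟨Set.mem_univ _, hc0 _, le_of_lt (hψ k)⟩
    obtain ⟨⟨yL, cL⟩, _, ρ, hρmono, hρtend⟩ := hcpt.tendsto_subseq hmem
    have hg : Continuous fun p : M × ℝ => φ p.2 p.1 :=
      hcont.comp (continuous_snd.prodMk continuous_fst)
    have hlim1 : Tendsto (fun k => φ (c (ψ (ρ k))) (y (ψ (ρ k)))) atTop (𝓝 (φ cL yL)) :=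
      (hg.tendsto _).comp hρtend
    have heq : ∀ n, φ (c n) (y n) = φ (a n) x := by
      intro n
      rw [hydef]
      rw [← hadd]
      congr 1
      simp [hcdef]
    have hlim2 : Tendsto (fun k => φ (c (ψ (ρ k))) (y (ψ (ρ k)))) atTop (𝓝 σ) := by
      simp only [heq]
      rw [tendsto_iff_dist_tendsto_zero]
      refine squeeze_zero (fun k => dist_nonneg) (fun k => le_of_lt (ha3 _)) ?_
      have hmono : ∀ k : ℕ, (k : ℝ) ≤ (ψ (ρ k) : ℝ) := by
        intro k
        exact_mod_cast le_trans (hρmono.id_le k) (hψmono.id_le (ρ k))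
      have : Tendsto (fun k : ℕ => ((ψ (ρ k) : ℝ) + 1)) atTop atTop :=
        tendsto_atTop_add_const_right _ 1
          (tendsto_atTop_mono hmono tendsto_natCast_atTop_atTop)
      have := this.inv_tendsto_atTop
      simpa [one_div, Pi.inv_def] using this
    have hcy : φ cL yL = σ := tendsto_nhds_unique hlim1 hlim2
    have hyL : yL = σ := by
      have : φ (-cL) (φ cL yL) = yL := by
        rw [← hadd]; simp [h0]
      rw [hcy, hσ] at this
      exact this.symm
    have hdist : Tendsto (fun k => dist (y (ψ (ρ k))) σ) atTop (𝓝 (dist yL σ)) :=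
      ((continuous_fst.dist continuous_const).tendsto _).comp hρtend
    simp only [hyδ] at hdist
    have := tendsto_nhds_unique hdist tendsto_const_nhds
    rw [hyL, dist_self] at this
    exact absurd this.symm (ne_of_gt hδ0)
  -- final limit point
  obtain ⟨yL, _, ρ, hρmono, hρtend⟩ :=
    isCompact_univ.tendsto_subseq (x := y) (fun n => Set.mem_univ _)
  have huinf : Tendsto (fun k => u (ρ k)) atTop atTop := by
    refine tendsto_atTop_mono (fun k => ?_) tendsto_natCast_atTop_atTop
    calc (k:ℝ) ≤ (ρ k : ℝ) := by exact_mod_cast hρmono.id_le k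
    _ ≤ b (ρ k) := hb1 _
    _ ≤ u (ρ k) := hbu _
  have hyLω : yL ∈ ω x := by
    rw [hω]
    exact ⟨fun k => u (ρ k), huinf, hρtend⟩
  have hyLδ : dist yL σ = δ := by
    have hdist : Tendsto (fun k => dist (y (ρ k)) σ) atTop (𝓝 (dist yL σ)) :=
      ((continuous_id.dist continuous_const).tendsto _).comp hρtend
    simp only [hyδ] at hdist
    exact tendsto_nhds_unique hdist tendsto_const_nhds
  have hyLne : yL ≠ σ := by
    intro h
    rw [h, dist_self] at hyLδ
    exact absurd hyLδ.symm (ne_of_gt hδ0)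
  have hforward : ∀ t : ℝ, 0 ≤ t → dist (φ t yL) σ ≤ δ := by
    intro t ht
    have hlim : Tendsto (fun k => φ t (y (ρ k))) atTop (𝓝 (φ t yL)) :=
      ((hcont.comp (continuous_const.prodMk continuous_id)).tendsto _).comp hρtend
    have hlimd : Tendsto (fun k => dist (φ t (y (ρ k))) σ) atTop (𝓝 (dist (φ t yL) σ)) :=
      hlim.dist tendsto_const_nhds
    refine le_of_tendsto hlimd ?_
    have hcρ : Tendsto (fun k => c (ρ k)) atTop atTop :=
      hcinf.comp hρmono.tendsto_atTop
    filter_upwards [hcρ.eventually_ge_atTop t] with k hk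
    exact horbit (ρ k) t ht hk
  have hball : ∀ t : ℝ, 0 ≤ t → φ t yL ∈ Metric.ball σ ε := by
    intro t ht
    exact Metric.mem_ball.2 (lt_of_le_of_lt (hforward t ht) hδε)
  exact ⟨yL, hyLne, hyLω, fun t ht => subset_closure (hball t ht),
    hloc yL hball⟩
end

section
/- Let f : M → ℝ be a continuous function on a compact metric space M with a continuous map T : M → M. If there exists a point x ∈ M and a sequence n_k → ∞ such that (1/n_k) Σ_{j=0}^{n_k−1} f(T^j x) ≥ 0 for all k, then there exists a T-invariant Borel probability measure μ on M with ∫ f dμ ≥ 0; moreover μ can be taken ergodic. -/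
open Filter Topology MeasureTheory Set TopologicalSpace
open scoped ENNReal NNReal
set_option linter.unusedSectionVars false
set_option linter.unusedVariables false
set_option linter.unusedTactic false
set_option maxHeartbeats 2000000

namespace Stmt10

variable {M : Type*} [MetricSpace M] [CompactSpace M] [MeasurableSpace M] [BorelSpace M]


lemma clamp_sum (N : ℕ) : ∀ y : ℝ, 0 ≤ y → y ≤ N →
    ∑ i ∈ Finset.range N, min (max (y - i) 0) 1 = y := by
  induction N with
  | zero => intro y h0 hN; simp at hN ⊢; linarith
  | succ N ih =>
    intro y h0 hN
    rw [Finset.sum_range_succ' (fun i => min (max (y - i) 0) 1) N]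
    simp only [Nat.cast_zero, sub_zero, Nat.cast_add, Nat.cast_one]
    by_cases hy : y ≤ 1
    · have hz : ∀ i ∈ Finset.range N, min (max (y - ((i:ℝ) + 1)) 0) 1 = 0 := by
        intro i hi
        have : y - ((i:ℝ)+1) ≤ 0 := by
          have : (0:ℝ) ≤ i := Nat.cast_nonneg i
          linarith
        rw [max_eq_right this, min_eq_left zero_le_one]
      rw [Finset.sum_congr rfl hz]
      simp [max_eq_left h0, min_eq_left hy]
    · push_neg at hy
      have h1 : ∀ i ∈ Finset.range N, min (max (y - ((i:ℝ)+1)) 0) 1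
          = min (max ((y-1) - i) 0) 1 := by
        intro i _; ring_nf
      rw [Finset.sum_congr rfl h1, ih (y-1) (by linarith) (by push_cast at hN ⊢; linarith)]
      rw [max_eq_left h0, min_eq_right hy.le]
      ring

lemma shift_sum {m : ℕ → ℝ} (hm : ∀ i, 0 ≤ m i) (N : ℕ) :
    ∑ i ∈ Finset.range N, m i ≤ m 0 + ∑ i ∈ Finset.range N, m (i + 1) := by
  cases N with
  | zero => simp only [Finset.range_zero, Finset.sum_empty, add_zero]; exact hm 0
  | succ N =>
    rw [Finset.sum_range_succ' m N]
    have := Finset.sum_le_sum_of_subset_of_nonneg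
      (Finset.range_subset_range.2 (Nat.le_succ N)) (fun i _ _ => hm (i+1))
    linarith


lemma cm_integrable (g : C(M, ℝ)) (μ : Measure M) [IsFiniteMeasure μ] :
    Integrable g μ := by
  have : HasCompactSupport (g : M → ℝ) := HasCompactSupport.of_compactSpace _
  exact g.continuous.integrable_of_hasCompactSupport this
section Riesz
variable (L : C(M, ℝ) →ₗ[ℝ] ℝ)

def admSet (K : Set M) : Set C(M, ℝ) := {g | 0 ≤ g ∧ ∀ x ∈ K, 1 ≤ g x}

noncomputable def rcR (K : Set M) : ℝ := sInf (L '' admSet K)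

variable (hpos : ∀ g : C(M, ℝ), 0 ≤ g → 0 ≤ L g)




lemma one_mem_admSet (K : Set M) : (1 : C(M, ℝ)) ∈ admSet K :=
  ⟨zero_le_one, fun _ _ => le_refl _⟩




section
include hpos

lemma zero_le_on_adm {K : Set M} {g : C(M, ℝ)} (hg : g ∈ admSet K) : 0 ≤ L g :=
  hpos g hg.1

lemma bddBelow_adm (K : Set M) : BddBelow (L '' admSet K) :=
  ⟨0, by rintro r ⟨g, hg, rfl⟩; exact zero_le_on_adm L hpos hg⟩

lemma rcR_nonneg (K : Set M) : 0 ≤ rcR L K :=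
  le_csInf ⟨L 1, 1, one_mem_admSet K, rfl⟩ (by rintro r ⟨g, hg, rfl⟩; exact zero_le_on_adm L hpos hg)

lemma rcR_le {K : Set M} {g : C(M, ℝ)} (hg : g ∈ admSet K) : rcR L K ≤ L g :=
  csInf_le (bddBelow_adm L hpos K) ⟨g, hg, rfl⟩

lemma le_rcR {K : Set M} {c : ℝ} (h : ∀ g ∈ admSet K, c ≤ L g) : c ≤ rcR L K :=
  le_csInf ⟨L 1, 1, one_mem_admSet K, rfl⟩ (by rintro r ⟨g, hg, rfl⟩; exact h g hg)

lemma rcR_mono {K₁ K₂ : Set M} (h : K₁ ⊆ K₂) : rcR L K₁ ≤ rcR L K₂ := by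
  refine csInf_le_csInf (bddBelow_adm L hpos K₁) ⟨L 1, 1, one_mem_admSet K₂, rfl⟩ ?_
  exact image_mono fun g hg => ⟨hg.1, fun x hx => hg.2 x (h hx)⟩

lemma L_mono {g h : C(M, ℝ)} (hgh : g ≤ h) : L g ≤ L h := by
  have := hpos (h - g) (by simpa [sub_nonneg] using hgh)
  simpa [map_sub, sub_nonneg] using this

/-- key upper bound: if `0 ≤ g ≤ 1` and `g` vanishes outside `K`, then `L g ≤ rcR K` -/
lemma L_le_rcR {K : Set M} {g : C(M, ℝ)} (hg1 : g ≤ 1)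
    (hgK : ∀ x, x ∉ K → g x = 0) : L g ≤ rcR L K := by
  refine le_rcR L hpos fun h hh => L_mono L hpos ?_
  intro y
  by_cases hy : y ∈ K
  · exact le_trans (hg1 y) (hh.2 y hy)
  · simpa [hgK y hy] using hh.1 y

lemma rcR_univ (hone : L 1 = 1) : rcR L (univ : Set M) = 1 := by
  refine le_antisymm (by simpa [hone] using rcR_le L hpos (one_mem_admSet univ)) ?_
  refine le_rcR L hpos fun g hg => ?_
  have : (1 : C(M, ℝ)) ≤ g := fun y => hg.2 y (mem_univ y)
  simpa [hone] using L_mono L hpos this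

lemma rcR_sup_le (K₁ K₂ : Set M) : rcR L (K₁ ∪ K₂) ≤ rcR L K₁ + rcR L K₂ := by
  refine le_of_forall_pos_le_add fun ε hε => ?_
  obtain ⟨r₁, ⟨g₁, hg₁, rfl⟩, h₁⟩ := exists_lt_of_csInf_lt
    (⟨L 1, 1, one_mem_admSet K₁, rfl⟩ : (L '' admSet K₁).Nonempty)
    (lt_add_of_pos_right (rcR L K₁) (half_pos hε))
  obtain ⟨r₂, ⟨g₂, hg₂, rfl⟩, h₂⟩ := exists_lt_of_csInf_lt
    (⟨L 1, 1, one_mem_admSet K₂, rfl⟩ : (L '' admSet K₂).Nonempty)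
    (lt_add_of_pos_right (rcR L K₂) (half_pos hε))
  have hadm : g₁ + g₂ ∈ admSet (K₁ ∪ K₂) := by
    refine ⟨add_nonneg hg₁.1 hg₂.1, ?_⟩
    rintro y (hy | hy)
    · calc (1:ℝ) ≤ g₁ y := hg₁.2 y hy
        _ ≤ g₁ y + g₂ y := le_add_of_nonneg_right (hg₂.1 y)
        _ = (g₁ + g₂) y := rfl
    · calc (1:ℝ) ≤ g₂ y := hg₂.2 y hy
        _ ≤ g₁ y + g₂ y := le_add_of_nonneg_left (hg₁.1 y)
        _ = (g₁ + g₂) y := rfl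
  calc rcR L (K₁ ∪ K₂) ≤ L (g₁ + g₂) := rcR_le L hpos hadm
    _ = L g₁ + L g₂ := map_add _ _ _
    _ ≤ rcR L K₁ + ε/2 + (rcR L K₂ + ε/2) := by linarith
    _ = rcR L K₁ + rcR L K₂ + ε := by ring

lemma rcR_sup_disjoint {K₁ K₂ : Set M} (hK₁ : IsCompact K₁) (hK₂ : IsCompact K₂)
    (hd : Disjoint K₁ K₂) :
    rcR L (K₁ ∪ K₂) = rcR L K₁ + rcR L K₂ := by
  refine le_antisymm (rcR_sup_le L hpos K₁ K₂) ?_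
  obtain ⟨φ, hφ0, hφ1, hφicc⟩ :=
    exists_continuous_zero_one_of_isCompact hK₂ hK₁.isClosed hd.symm
  refine le_rcR L hpos fun g hg => ?_
  have h₁ : rcR L K₁ ≤ L (g * φ) := by
    refine rcR_le L hpos ⟨fun y => mul_nonneg (hg.1 y) (hφicc y).1, fun y hy => ?_⟩
    have : φ y = 1 := hφ1 hy
    calc (1:ℝ) ≤ g y := hg.2 y (Or.inl hy)
      _ = g y * φ y := by rw [this, mul_one]
      _ = (g * φ) y := rfl
  have h₂ : rcR L K₂ ≤ L (g * (1 - φ)) := by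
    refine rcR_le L hpos ⟨fun y => mul_nonneg (hg.1 y) (by
      have := (hφicc y).2
      simp only [ContinuousMap.sub_apply, ContinuousMap.one_apply]
      linarith), fun y hy => ?_⟩
    have : φ y = 0 := hφ0 hy
    have h1 : (1:ℝ) ≤ g y := hg.2 y (Or.inr hy)
    calc (1:ℝ) ≤ g y * (1 - φ y) := by rw [this]; simpa using h1
      _ = (g * (1 - φ)) y := by simp [ContinuousMap.mul_apply]
  have : L (g * φ) + L (g * (1 - φ)) = L g := by
    rw [← map_add]
    congr 1
    ring
  linarith

end

noncomputable def rieszContent : Content M where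
  toFun K := (rcR L K).toNNReal
  mono' K₁ K₂ h := Real.toNNReal_mono (rcR_mono L hpos h)
  sup_disjoint' K₁ K₂ hd _ _ := by
    have h := rcR_sup_disjoint L hpos K₁.isCompact K₂.isCompact hd
    simp only [Compacts.coe_sup]
    rw [h, Real.toNNReal_add (rcR_nonneg L hpos _) (rcR_nonneg L hpos _)]
  sup_le' K₁ K₂ := by
    simp only [Compacts.coe_sup]
    calc (rcR L ((K₁ : Set M) ∪ K₂)).toNNReal
        ≤ (rcR L (K₁ : Set M) + rcR L (K₂ : Set M)).toNNReal :=
          Real.toNNReal_mono (rcR_sup_le L hpos _ _)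
      _ = _ := Real.toNNReal_add (rcR_nonneg L hpos _) (rcR_nonneg L hpos _)


noncomputable def rieszMeasure : Measure M := (rieszContent L hpos).measure

lemma rieszContent_coe (K : Compacts M) :
    (rieszContent L hpos K : ℝ≥0∞) = ENNReal.ofReal (rcR L (K : Set M)) := by
  rfl

/-- value on open sets -/
lemma rieszMeasure_open {U : Set M} (hU : IsOpen U) :
    rieszMeasure L hpos U = (rieszContent L hpos).innerContent ⟨U, hU⟩ := by
  rw [rieszMeasure, Content.measure_apply _ hU.measurableSet,
    Content.outerMeasure_of_isOpen _ _ hU]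

lemma rieszMeasure_isProbability (hone : L 1 = 1) :
    IsProbabilityMeasure (rieszMeasure L hpos) := by
  constructor
  rw [rieszMeasure_open L hpos isOpen_univ]
  have h1 : (rieszContent L hpos).innerContent ⟨univ, isOpen_univ⟩
      = rieszContent L hpos ⟨univ, isCompact_univ⟩ := by
    refine le_antisymm ?_ (Content.le_innerContent _ _ _ (subset_univ _))
    refine iSup_le fun K => iSup_le fun _ => Content.mono _ _ _ (subset_univ _)
  rw [h1, rieszContent_coe]
  show ENNReal.ofReal (rcR L (univ : Set M)) = 1
  rw [rcR_univ L hpos hone]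
  simp

/-- bounds linking measure and content -/
lemma le_rieszMeasure {K : Set M} (hK : IsCompact K) {U : Set M} (hU : IsOpen U)
    (hKU : K ⊆ U) :
    ENNReal.ofReal (rcR L K) ≤ rieszMeasure L hpos U := by
  rw [rieszMeasure_open L hpos hU]
  exact le_trans (le_of_eq (rieszContent_coe L hpos ⟨K, hK⟩).symm)
    (Content.le_innerContent _ ⟨K, hK⟩ _ hKU)

lemma rieszMeasure_le {U : Set M} (hU : IsOpen U) {K : Set M} (hUK : U ⊆ K) :
    rieszMeasure L hpos U ≤ ENNReal.ofReal (rcR L K) := by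
  rw [rieszMeasure_open L hpos hU]
  refine iSup_le fun K' => iSup_le fun hK' => ?_
  refine le_trans (le_of_eq (rieszContent_coe L hpos K'))
    (ENNReal.ofReal_le_ofReal (rcR_mono L hpos (le_trans hK' hUK)))
theorem integral_riesz01 (hone : L 1 = 1)
    (g : C(M, ℝ)) (hg0 : 0 ≤ g) (hg1 : g ≤ 1) :
    ∫ y, g y ∂(rieszMeasure L hpos) = L g := by
  set μ := rieszMeasure L hpos with hμdef
  haveI : IsProbabilityMeasure μ := rieszMeasure_isProbability L hpos hone
  have key : ∀ N' : ℕ,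
      (((N' + 1 : ℕ) : ℝ) * L g ≤ 2 + ((N' + 1 : ℕ) : ℝ) * ∫ y, g y ∂μ) ∧
      (((N' + 1 : ℕ) : ℝ) * ∫ y, g y ∂μ ≤ 2 + ((N' + 1 : ℕ) : ℝ) * L g) := by
    intro N'
    set N : ℕ := N' + 1 with hNdef
    have hNpos : (0:ℝ) < N := by positivity
    set gi : ℕ → C(M, ℝ) := fun i => (((N : ℝ) • g - (i : ℝ) • 1) ⊔ 0) ⊓ 1 with hgidef
    have gi_apply : ∀ i y, gi i y = min (max ((N : ℝ) * g y - i) 0) 1 := by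
      intro i y
      simp [hgidef, smul_eq_mul]
    set A : ℕ → Set M := fun i => {y | (i : ℝ) ≤ (N : ℝ) * g y} with hAdef
    have hAclosed : ∀ i, IsClosed (A i) :=
      fun i => isClosed_le continuous_const (continuous_const.mul g.continuous)
    have hAmeas : ∀ i, MeasurableSet (A i) := fun i => (hAclosed i).measurableSet
    have hAcomp : ∀ i, IsCompact (A i) := fun i => (hAclosed i).isCompact
    have hgi0 : ∀ i y, 0 ≤ gi i y := by
      intro i y; rw [gi_apply]; exact le_min (le_max_right _ _) zero_le_one
    have hgi0' : ∀ i, (0 : C(M, ℝ)) ≤ gi i := fun i y => hgi0 i y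
    have hNcast : (N:ℝ) = (N':ℝ) + 1 := by rw [hNdef]; push_cast; ring
    have hgi1 : ∀ i, gi i ≤ 1 := by
      intro i y
      show gi i y ≤ (1 : C(M, ℝ)) y
      rw [gi_apply, ContinuousMap.one_apply]
      exact min_le_right _ _
    have hgi_one : ∀ i, ∀ y ∈ A (i + 1), 1 ≤ gi i y := by
      intro i y hy
      rw [gi_apply]
      have hy' : ((i:ℝ) + 1) ≤ (N : ℝ) * g y := by
        have h := hy; simp only [hAdef, mem_setOf_eq, Nat.cast_add, Nat.cast_one] at h; exact h
      exact le_min (le_max_of_le_left (by linarith)) le_rfl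
    have hgi_zero : ∀ i, ∀ y, y ∉ A i → gi i y = 0 := by
      intro i y hy
      rw [gi_apply]
      have : (N : ℝ) * g y < i := by
        simpa [hAdef, mem_setOf_eq, not_le] using hy
      rw [max_eq_right (by linarith), min_eq_left zero_le_one]
    have hint : ∀ i, Integrable (gi i) μ := fun i => cm_integrable _ _
    set r : ℕ → ℝ := fun i => rcR L (A i) with hrdef
    set m : ℕ → ℝ := fun i => (μ (A i)).toReal with hmdef
    have hr0 : ∀ i, 0 ≤ r i := fun i => rcR_nonneg L hpos _
    have hm0 : ∀ i, 0 ≤ m i := fun i => ENNReal.toReal_nonneg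
    have hAtop : ∀ i, μ (A i) ≠ ⊤ := fun i => measure_ne_top μ _
    have B1 : ∀ i, r (i + 1) ≤ L (gi i) :=
      fun i => rcR_le L hpos ⟨hgi0' i, fun y hy => hgi_one i y hy⟩
    have B2 : ∀ i, L (gi i) ≤ r i := fun i => L_le_rcR L hpos (hgi1 i) (hgi_zero i)
    have B3 : ∀ i, m (i + 1) ≤ ∫ y, gi i y ∂μ := by
      intro i
      have h1 : m (i+1) = ∫ y, (A (i+1)).indicator (fun _ => (1:ℝ)) y ∂μ := by
        rw [integral_indicator_const (1:ℝ) (hAmeas (i+1))]; simp [hmdef]; rfl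
      rw [h1]
      refine integral_mono ((integrable_const (1:ℝ)).indicator (hAmeas (i+1))) (hint i) ?_
      intro y
      by_cases hy : y ∈ A (i+1)
      · rw [indicator_of_mem hy]; exact hgi_one i y hy
      · rw [indicator_of_notMem hy]; exact hgi0 i y
    have B4 : ∀ i, ∫ y, gi i y ∂μ ≤ m i := by
      intro i
      have h1 : m i = ∫ y, (A i).indicator (fun _ => (1:ℝ)) y ∂μ := by
        rw [integral_indicator_const (1:ℝ) (hAmeas i)]; simp [hmdef]; rfl
      rw [h1]
      refine integral_mono (hint i) ((integrable_const (1:ℝ)).indicator (hAmeas i)) ?_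
      intro y
      by_cases hy : y ∈ A i
      · rw [indicator_of_mem hy]; exact le_trans (min_le_right _ _) le_rfl |>.trans_eq' (by rw [gi_apply])
      · rw [indicator_of_notMem hy, hgi_zero i y hy]
    have hU : ∀ i : ℕ, IsOpen {y : M | (i:ℝ) < (N:ℝ) * g y} :=
      fun i => isOpen_lt continuous_const (continuous_const.mul g.continuous)
    have hAU : ∀ i : ℕ, A (i+1) ⊆ {y : M | (i:ℝ) < (N:ℝ) * g y} := by
      intro i y hy
      simp only [hAdef, mem_setOf_eq, Nat.cast_add, Nat.cast_one] at hy ⊢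
      linarith
    have hUA : ∀ i : ℕ, {y : M | (i:ℝ) < (N:ℝ) * g y} ⊆ A i :=
      fun i y hy => show (i:ℝ) ≤ (N:ℝ) * g y from le_of_lt hy
    have B5 : ∀ i, r (i + 1) ≤ m i := by
      intro i
      have h1 : ENNReal.ofReal (r (i+1)) ≤ μ {y : M | (i:ℝ) < (N:ℝ) * g y} :=
        le_rieszMeasure L hpos (hAcomp (i+1)) (hU i) (hAU i)
      have h2 := measure_mono (μ := μ) (hUA i)
      have := ENNReal.toReal_mono (hAtop i) (h1.trans h2)
      rwa [ENNReal.toReal_ofReal (hr0 (i+1))] at this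
    have B6 : ∀ i, m (i + 1) ≤ r i := by
      intro i
      have h1 : μ (A (i+1)) ≤ μ {y : M | (i:ℝ) < (N:ℝ) * g y} := measure_mono (hAU i)
      have h2 : μ {y : M | (i:ℝ) < (N:ℝ) * g y} ≤ ENNReal.ofReal (r i) :=
        rieszMeasure_le L hpos (hU i) (hUA i)
      have := ENNReal.toReal_mono ENNReal.ofReal_ne_top (h1.trans h2)
      rwa [ENNReal.toReal_ofReal (hr0 i)] at this
    have B7r : r 0 ≤ 1 := by
      have := rcR_mono L hpos (subset_univ (A 0))
      rw [rcR_univ L hpos hone] at this; exact this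
    have B7m : m 0 ≤ 1 := by
      have := prob_le_one (μ := μ) (s := A 0)
      exact ENNReal.toReal_le_of_le_ofReal zero_le_one (by simpa using this)
    have Hsum : ∀ y, ∑ i ∈ Finset.range N, gi i y = (N : ℝ) * g y := by
      intro y
      have h0 : 0 ≤ (N:ℝ) * g y := mul_nonneg hNpos.le (hg0 y)
      have h1 : (N:ℝ) * g y ≤ N := by
        have hgy1 : g y ≤ 1 := by simpa using hg1 y
        nlinarith
      calc ∑ i ∈ Finset.range N, gi i y
          = ∑ i ∈ Finset.range N, min (max ((N : ℝ) * g y - i) 0) 1 :=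
            Finset.sum_congr rfl fun i _ => gi_apply i y
        _ = (N : ℝ) * g y := clamp_sum N _ h0 h1
    have HL : ∑ i ∈ Finset.range N, L (gi i) = (N : ℝ) * L g := by
      rw [← map_sum]
      have heq : ∑ i ∈ Finset.range N, gi i = (N : ℝ) • g := by
        ext y
        simp only [ContinuousMap.coe_sum, Finset.sum_apply, ContinuousMap.smul_apply,
          smul_eq_mul]
        exact Hsum y
      rw [heq, _root_.map_smul, smul_eq_mul]
    have HI : ∑ i ∈ Finset.range N, ∫ y, gi i y ∂μ = (N : ℝ) * ∫ y, g y ∂μ := by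
      rw [← integral_finset_sum _ (fun i _ => hint i)]
      simp_rw [Hsum]
      rw [integral_const_mul]
    have up : ((N:ℕ):ℝ) * L g ≤ 2 + ((N:ℕ):ℝ) * ∫ y, g y ∂μ := by
      have c1 : (N:ℝ) * L g ≤ ∑ i ∈ Finset.range N, r i := by
        rw [← HL]; exact Finset.sum_le_sum fun i _ => B2 i
      have c2 : ∑ i ∈ Finset.range N, r i = (∑ i ∈ Finset.range N', r (i+1)) + r 0 :=
        Finset.sum_range_succ' r N'
      have c3 : ∑ i ∈ Finset.range N', r (i+1) ≤ ∑ i ∈ Finset.range N', m i :=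
        Finset.sum_le_sum fun i _ => B5 i
      have c4 : ∑ i ∈ Finset.range N', m i ≤ ∑ i ∈ Finset.range N, m i :=
        Finset.sum_le_sum_of_subset_of_nonneg (Finset.range_subset_range.2 (Nat.le_succ N'))
          (fun i _ _ => hm0 i)
      have c5 : ∑ i ∈ Finset.range N, m i ≤ m 0 + ∑ i ∈ Finset.range N, m (i+1) :=
        shift_sum hm0 N
      have c6 : ∑ i ∈ Finset.range N, m (i+1) ≤ ∑ i ∈ Finset.range N, ∫ y, gi i y ∂μ :=
        Finset.sum_le_sum fun i _ => B3 i
      rw [HI] at c6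
      linarith
    have down : ((N:ℕ):ℝ) * ∫ y, g y ∂μ ≤ 2 + ((N:ℕ):ℝ) * L g := by
      have c1 : (N:ℝ) * ∫ y, g y ∂μ ≤ ∑ i ∈ Finset.range N, m i := by
        rw [← HI]; exact Finset.sum_le_sum fun i _ => B4 i
      have c2 : ∑ i ∈ Finset.range N, m i = (∑ i ∈ Finset.range N', m (i+1)) + m 0 :=
        Finset.sum_range_succ' m N'
      have c3 : ∑ i ∈ Finset.range N', m (i+1) ≤ ∑ i ∈ Finset.range N', r i :=
        Finset.sum_le_sum fun i _ => B6 i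
      have c4 : ∑ i ∈ Finset.range N', r i ≤ ∑ i ∈ Finset.range N, r i :=
        Finset.sum_le_sum_of_subset_of_nonneg (Finset.range_subset_range.2 (Nat.le_succ N'))
          (fun i _ _ => hr0 i)
      have c5 : ∑ i ∈ Finset.range N, r i ≤ r 0 + ∑ i ∈ Finset.range N, r (i+1) :=
        shift_sum hr0 N
      have c6 : ∑ i ∈ Finset.range N, r (i+1) ≤ ∑ i ∈ Finset.range N, L (gi i) :=
        Finset.sum_le_sum fun i _ => B1 i
      rw [HL] at c6
      linarith
    exact ⟨up, down⟩
  have conc : ∀ a b : ℝ, (∀ N' : ℕ, ((N'+1:ℕ):ℝ) * a ≤ 2 + ((N'+1:ℕ):ℝ) * b) → a ≤ b := by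
    intro a b h
    refine le_of_forall_pos_le_add fun ε hε => ?_
    obtain ⟨N', hN'⟩ := exists_nat_gt (2/ε)
    have hN : (2/ε) < ((N'+1:ℕ):ℝ) := by push_cast; push_cast at hN'; linarith
    have hNpos : (0:ℝ) < ((N'+1:ℕ):ℝ) := lt_of_le_of_lt (by positivity) hN
    have h2 : 2 < ε * ((N'+1:ℕ):ℝ) := by
      rw [div_lt_iff₀ hε] at hN; linarith
    have := h N'
    nlinarith
  have h1 : L g ≤ ∫ y, g y ∂μ := conc _ _ fun N' => (key N').1
  have h2 : ∫ y, g y ∂μ ≤ L g := conc _ _ fun N' => (key N').2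
  linarith


theorem integral_riesz (hone : L 1 = 1) (g : C(M, ℝ)) :
    ∫ y, g y ∂(rieszMeasure L hpos) = L g := by
  haveI := rieszMeasure_isProbability L hpos hone
  have hnn : ∀ h : C(M, ℝ), 0 ≤ h → ∫ y, h y ∂(rieszMeasure L hpos) = L h := by
    intro h h0
    set cc : ℝ := ‖h‖ + 1 with hccdef
    have hccpos : (0:ℝ) < cc := by positivity
    have hub : ∀ y, h y ≤ cc := fun y => by
      have := h.norm_coe_le_norm y
      rw [Real.norm_eq_abs, abs_le] at this
      rw [hccdef]; linarith [this.2]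
    have h01 : (0 : C(M, ℝ)) ≤ cc⁻¹ • h := fun y => by
      show (0 : C(M, ℝ)) y ≤ (cc⁻¹ • h) y
      simp only [ContinuousMap.zero_apply, ContinuousMap.smul_apply, smul_eq_mul]
      have hy : (0:ℝ) ≤ h y := by simpa using h0 y
      positivity
    have hle1 : cc⁻¹ • h ≤ 1 := fun y => by
      show (cc⁻¹ • h) y ≤ (1 : C(M, ℝ)) y
      simp only [ContinuousMap.smul_apply, smul_eq_mul, ContinuousMap.one_apply]
      calc cc⁻¹ * h y ≤ cc⁻¹ * cc :=
            mul_le_mul_of_nonneg_left (hub y) (inv_nonneg.2 hccpos.le)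
        _ = 1 := inv_mul_cancel₀ hccpos.ne'
    have key := integral_riesz01 L hpos hone (cc⁻¹ • h) h01 hle1
    have e1 : ∫ y, (cc⁻¹ • h) y ∂(rieszMeasure L hpos)
        = cc⁻¹ * ∫ y, h y ∂(rieszMeasure L hpos) := by
      simp only [ContinuousMap.smul_apply, smul_eq_mul]
      rw [integral_const_mul]
    have e2 : L (cc⁻¹ • h) = cc⁻¹ * L h := by rw [_root_.map_smul, smul_eq_mul]
    rw [e1, e2] at key
    exact mul_left_cancel₀ (inv_ne_zero hccpos.ne') key
  set d : ℝ := ‖g‖ with hddef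
  have hlb : ∀ y, -d ≤ g y := fun y => by
    have := g.norm_coe_le_norm y
    rw [Real.norm_eq_abs, abs_le] at this
    exact this.1
  have hg' : (0 : C(M, ℝ)) ≤ g + d • 1 := fun y => by
    show (0 : C(M, ℝ)) y ≤ (g + d • 1) y
    simp only [ContinuousMap.zero_apply, ContinuousMap.add_apply, ContinuousMap.smul_apply,
      ContinuousMap.one_apply, smul_eq_mul, mul_one]
    linarith [hlb y]
  have key := hnn (g + d • 1) hg'
  have e1 : ∫ y, (g + d • 1) y ∂(rieszMeasure L hpos)
      = (∫ y, g y ∂(rieszMeasure L hpos)) + d := by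
    simp only [ContinuousMap.add_apply, ContinuousMap.smul_apply, ContinuousMap.one_apply,
      smul_eq_mul, mul_one]
    rw [integral_add (cm_integrable g _) (integrable_const d), integral_const]
    simp
  have e2 : L (g + d • 1) = L g + d := by
    rw [map_add, _root_.map_smul, hone, smul_eq_mul, mul_one]
  rw [e1, e2] at key
  linarith

end Riesz

section Dual
variable (T : M → M) (hT : Continuous T)




/-- the set of positive normalized `T`-invariant functionals -/
def SInv (T : M → M) (hT : Continuous T) : Set (WeakDual ℝ C(M, ℝ)) :=
  {φ | (∀ g : C(M, ℝ), 0 ≤ g → 0 ≤ φ g) ∧ φ 1 = 1 ∧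
    ∀ g : C(M, ℝ), φ (g.comp ⟨T, hT⟩) = φ g}


lemma isClosed_SInv : IsClosed (SInv T hT) := by
  have h1 : IsClosed {φ : WeakDual ℝ C(M, ℝ) | ∀ g : C(M, ℝ), 0 ≤ g → 0 ≤ φ g} := by
    simp only [setOf_forall]
    refine isClosed_iInter fun g => isClosed_iInter fun _ => ?_
    exact isClosed_le continuous_const (WeakDual.eval_continuous g)
  have h2 : IsClosed {φ : WeakDual ℝ C(M, ℝ) | φ 1 = 1} :=
    isClosed_eq (WeakDual.eval_continuous 1) continuous_const
  have h3 : IsClosed {φ : WeakDual ℝ C(M, ℝ) |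
      ∀ g : C(M, ℝ), φ (g.comp ⟨T, hT⟩) = φ g} := by
    simp only [setOf_forall]
    exact isClosed_iInter fun g =>
      isClosed_eq (WeakDual.eval_continuous _) (WeakDual.eval_continuous _)
  have : SInv T hT = {φ : WeakDual ℝ C(M, ℝ) | ∀ g : C(M, ℝ), 0 ≤ g → 0 ≤ φ g}
      ∩ ({φ | φ 1 = 1} ∩ {φ | ∀ g : C(M, ℝ), φ (g.comp ⟨T, hT⟩) = φ g}) := by
    ext φ; simp [SInv, mem_inter_iff, and_assoc]
  rw [this]
  exact h1.inter (h2.inter h3)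

lemma abs_apply_le_of_mem {φ : WeakDual ℝ C(M, ℝ)} (hφ : φ ∈ SInv T hT) (g : C(M, ℝ)) :
    |φ g| ≤ ‖g‖ := by
  obtain ⟨hpos, hone, -⟩ := hφ
  have hub : ∀ y, g y ≤ ‖g‖ := fun y => by
    have := g.norm_coe_le_norm y; rw [Real.norm_eq_abs, abs_le] at this; exact this.2
  have hlb : ∀ y, -‖g‖ ≤ g y := fun y => by
    have := g.norm_coe_le_norm y; rw [Real.norm_eq_abs, abs_le] at this; exact this.1
  have h1 : 0 ≤ φ (‖g‖ • (1 : C(M, ℝ)) - g) := by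
    refine hpos _ fun y => ?_
    show (0 : C(M, ℝ)) y ≤ (‖g‖ • (1 : C(M, ℝ)) - g) y
    simp only [ContinuousMap.sub_apply, ContinuousMap.smul_apply, ContinuousMap.one_apply,
      smul_eq_mul, mul_one, ContinuousMap.zero_apply]
    linarith [hub y]
  have h2 : 0 ≤ φ (‖g‖ • (1 : C(M, ℝ)) + g) := by
    refine hpos _ fun y => ?_
    show (0 : C(M, ℝ)) y ≤ (‖g‖ • (1 : C(M, ℝ)) + g) y
    simp only [ContinuousMap.add_apply, ContinuousMap.smul_apply, ContinuousMap.one_apply,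
      smul_eq_mul, mul_one, ContinuousMap.zero_apply]
    linarith [hlb y]
  rw [map_sub, _root_.map_smul, hone, smul_eq_mul, mul_one] at h1
  rw [map_add, _root_.map_smul, hone, smul_eq_mul, mul_one] at h2
  rw [abs_le]; constructor <;> linarith

lemma isCompact_SInv : IsCompact (SInv T hT) := by
  refine WeakDual.isCompact_of_bounded_of_closed ?_ (isClosed_SInv T hT)
  refine (Metric.isBounded_closedBall (x := (0 : StrongDual ℝ C(M, ℝ))) (r := 1)).subset ?_
  intro φ hφ
  rw [Metric.mem_closedBall]
  refine le_trans (le_of_eq (dist_zero_right φ)) ?_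
  refine ContinuousLinearMap.opNorm_le_bound _ zero_le_one fun g => ?_
  rw [one_mul]
  have := abs_apply_le_of_mem T hT hφ g
  rw [Real.norm_eq_abs]; exact this

lemma convex_SInv : Convex ℝ (SInv T hT) := by
  intro φ hφ ψ hψ a b ha hb hab
  have happ : ∀ g : C(M, ℝ), (a • φ + b • ψ) g = a * φ g + b * ψ g := fun g => rfl
  refine ⟨fun g hg => ?_, ?_, fun g => ?_⟩
  · rw [happ]
    exact add_nonneg (mul_nonneg ha (hφ.1 g hg)) (mul_nonneg hb (hψ.1 g hg))
  · rw [happ, hφ.2.1, hψ.2.1]; linarith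
  · rw [happ, happ, hφ.2.2 g, hψ.2.2 g]

/-- the functional attached to a probability measure -/
noncomputable def measFunctional (μ : Measure M) [IsProbabilityMeasure μ] :
    WeakDual ℝ C(M, ℝ) :=
  StrongDual.toWeakDual (LinearMap.mkContinuous
    { toFun := fun g => ∫ y, g y ∂μ
      map_add' := fun g h => by
        rw [← integral_add (cm_integrable g μ) (cm_integrable h μ)]
        simp [ContinuousMap.add_apply]
      map_smul' := fun c g => by
        simp only [RingHom.id_apply]
        rw [← integral_smul]
        simp [ContinuousMap.smul_apply] }
    1 (fun g => by
      simp only [LinearMap.coe_mk, AddHom.coe_mk, one_mul]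
      calc ‖∫ y, g y ∂μ‖ ≤ ‖g‖ * (μ univ).toReal :=
        norm_integral_le_of_norm_le_const (Filter.Eventually.of_forall fun y =>
          g.norm_coe_le_norm y)
      _ = ‖g‖ := by simp))

lemma measFunctional_apply (μ : Measure M) [IsProbabilityMeasure μ] (g : C(M, ℝ)) :
    measFunctional μ g = ∫ y, g y ∂μ := rfl

lemma measFunctional_mem_SInv (μ : Measure M) [IsProbabilityMeasure μ]
    (hinv : μ.map T = μ) : measFunctional μ ∈ SInv T hT := by
  refine ⟨fun g hg => ?_, ?_, fun g => ?_⟩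
  · rw [measFunctional_apply]
    exact integral_nonneg fun y => hg y
  · rw [measFunctional_apply]
    simp [integral_const]
  · rw [measFunctional_apply, measFunctional_apply]
    have : ∫ y, g (T y) ∂μ = ∫ y, g y ∂(μ.map T) := by
      rw [integral_map hT.measurable.aemeasurable g.continuous.aestronglyMeasurable]
    simp only [ContinuousMap.comp_apply, ContinuousMap.coe_mk]
    rw [this, hinv]

lemma coe_toLin (ψ : WeakDual ℝ C(M, ℝ)) : True := trivial

instance weakDualLCS (E : Type*) [NormedAddCommGroup E] [NormedSpace ℝ E] :
    LocallyConvexSpace ℝ (WeakDual ℝ E) :=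
  inferInstanceAs (LocallyConvexSpace ℝ (WeakBilin (topDualPairing ℝ E)))

noncomputable def toLin (ψ : WeakDual ℝ C(M, ℝ)) : C(M, ℝ) →ₗ[ℝ] ℝ where
  toFun g := ψ g
  map_add' a b := map_add ψ a b
  map_smul' c a := map_smul ψ c a

theorem exists_ergodic_measure (fc : C(M, ℝ))
    (L₀ : WeakDual ℝ C(M, ℝ)) (hL₀ : L₀ ∈ SInv T hT) (hL₀f : 0 ≤ L₀ fc) :
    ∃ μ : Measure M, IsProbabilityMeasure μ ∧ Ergodic T μ ∧ 0 ≤ ∫ y, fc y ∂μ := by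
  have hS_ne : (SInv T hT).Nonempty := ⟨L₀, hL₀⟩
  have hS_cpt := isCompact_SInv T hT
  -- maximize evaluation at fc
  obtain ⟨φ₀, hφ₀S, hmax⟩ := hS_cpt.exists_isMaxOn hS_ne
    ((WeakDual.eval_continuous fc).continuousOn)
  set c : ℝ := φ₀ fc with hcdef
  have hc0 : 0 ≤ c := le_trans hL₀f (hmax hL₀)
  -- the face
  set F : Set (WeakDual ℝ C(M, ℝ)) := SInv T hT ∩ {φ | φ fc = c} with hFdef
  have hF_ne : F.Nonempty := ⟨φ₀, hφ₀S, rfl⟩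
  have hF_cpt : IsCompact F := hS_cpt.inter_right (isClosed_eq (WeakDual.eval_continuous fc)
    continuous_const)
  have hF_convex : Convex ℝ F := by
    have hFeq : F = SInv T hT ∩ {φ | c ≤ φ fc} := by
      ext φ
      constructor
      · rintro ⟨h1, h2⟩; exact ⟨h1, le_of_eq h2.symm⟩
      · rintro ⟨h1, h2⟩; exact ⟨h1, le_antisymm (hmax h1) h2⟩
    rw [hFeq]
    refine (convex_SInv T hT).inter ?_
    have hlin : IsLinearMap ℝ (fun φ : WeakDual ℝ C(M, ℝ) => φ fc) :=
      ⟨fun a b => rfl, fun r a => rfl⟩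
    exact convex_halfSpace_ge hlin c
  -- extreme point
  obtain ⟨ψ, hψmem⟩ := hF_cpt.extremePoints_nonempty hF_ne
  rw [mem_extremePoints] at hψmem
  obtain ⟨hψF, hψext⟩ := hψmem
  obtain ⟨hψS, (hψf : ψ fc = c)⟩ := hψF
  obtain ⟨hψpos, hψone, hψinv⟩ := hψS
  have hpos' : ∀ g : C(M, ℝ), 0 ≤ g → 0 ≤ toLin ψ g := hψpos
  have hone' : toLin ψ 1 = 1 := hψone
  set μ : Measure M := rieszMeasure (toLin ψ) hpos' with hμdef
  haveI hμprob : IsProbabilityMeasure μ := rieszMeasure_isProbability _ hpos' hone'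
  have hint : ∀ g : C(M, ℝ), ∫ y, g y ∂μ = ψ g := fun g =>
    integral_riesz (toLin ψ) hpos' hone' g
  -- invariance of μ
  have hmap : μ.map T = μ := by
    haveI : IsProbabilityMeasure (μ.map T) :=
      Measure.isProbabilityMeasure_map hT.measurable.aemeasurable
    refine ext_of_forall_lintegral_eq_of_IsFiniteMeasure fun b => ?_
    set gb : C(M, ℝ) := ⟨fun y => (b y : ℝ), NNReal.continuous_coe.comp b.continuous⟩ with hgb
    have e1 := lintegral_coe_eq_integral (fun y => b y) (cm_integrable gb (μ.map T))
    have e2 := lintegral_coe_eq_integral (fun y => b y) (cm_integrable gb μ)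
    rw [e1, e2]
    congr 1
    show (∫ y, gb y ∂(μ.map T)) = ∫ y, gb y ∂μ
    have e3 : ∫ y, gb y ∂(μ.map T) = ∫ y, gb (T y) ∂μ :=
      integral_map hT.measurable.aemeasurable gb.continuous.aestronglyMeasurable
    rw [e3]
    have e4 : ∫ y, gb (T y) ∂μ = ∫ y, (gb.comp ⟨T, hT⟩) y ∂μ := rfl
    rw [e4, hint, hint, hψinv]
  have hmp : MeasurePreserving T μ μ := ⟨hT.measurable, hmap⟩
  -- ergodicity
  have herg : Ergodic T μ := by
    refine ⟨hmp, ⟨fun s hs hTs => ?_⟩⟩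
    rw [Filter.eventuallyConst_set']
    by_contra hcon
    push_neg at hcon
    obtain ⟨hne', hnu'⟩ := hcon
    have hne : μ s ≠ 0 := fun h => hne' (ae_eq_empty.2 h)
    have hnu : μ sᶜ ≠ 0 := fun h => hnu' (ae_eq_univ.2 h)
    -- the two conditional measures
    have hsfin : μ s ≠ ⊤ := measure_ne_top μ s
    have hscfin : μ sᶜ ≠ ⊤ := measure_ne_top μ sᶜ
    set a : ℝ := (μ s).toReal with hadef
    set bb : ℝ := (μ sᶜ).toReal with hbdef
    have ha : 0 < a := ENNReal.toReal_pos hne hsfin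
    have hb : 0 < bb := ENNReal.toReal_pos hnu hscfin
    have hab : a + bb = 1 := by
      rw [hadef, hbdef, ← ENNReal.toReal_add hsfin hscfin, measure_add_measure_compl hs]
      simp
    set ν₁ : Measure M := (μ s)⁻¹ • μ.restrict s with hν₁
    set ν₂ : Measure M := (μ sᶜ)⁻¹ • μ.restrict sᶜ with hν₂
    haveI hν₁p : IsProbabilityMeasure ν₁ := by
      constructor
      rw [hν₁, Measure.smul_apply, Measure.restrict_apply_univ, smul_eq_mul,
        ENNReal.inv_mul_cancel hne hsfin]
    haveI hν₂p : IsProbabilityMeasure ν₂ := by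
      constructor
      rw [hν₂, Measure.smul_apply, Measure.restrict_apply_univ, smul_eq_mul,
        ENNReal.inv_mul_cancel hnu hscfin]
    -- invariance of restricted measures
    have hrs : ∀ (t : Set M), MeasurableSet t → t = T ⁻¹' t →
        (μ.restrict t).map T = μ.restrict t := by
      intro t ht hTt
      refine Measure.ext fun A hA => ?_
      rw [Measure.map_apply hT.measurable hA, Measure.restrict_apply (hT.measurable hA),
        Measure.restrict_apply hA]
      have : T ⁻¹' A ∩ t = T ⁻¹' (A ∩ t) := by
        rw [preimage_inter, ← hTt]
      rw [this, ← Measure.map_apply hT.measurable (hA.inter ht), hmap]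
    have hν₁inv : ν₁.map T = ν₁ := by
      rw [hν₁, Measure.map_smul, hrs s hs hTs.symm]
    have hν₂inv : ν₂.map T = ν₂ := by
      have hTsc : sᶜ = T ⁻¹' sᶜ := by rw [preimage_compl, hTs]
      rw [hν₂, Measure.map_smul, hrs sᶜ hs.compl hTsc]
    set φ₁ := measFunctional ν₁ with hφ₁
    set φ₂ := measFunctional ν₂ with hφ₂
    have hφ₁S : φ₁ ∈ SInv T hT := measFunctional_mem_SInv T hT ν₁ hν₁inv
    have hφ₂S : φ₂ ∈ SInv T hT := measFunctional_mem_SInv T hT ν₂ hν₂inv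
    -- decomposition
    have hsmul₁ : ∀ g : C(M, ℝ), a * φ₁ g = ∫ y in s, g y ∂μ := by
      intro g
      rw [hφ₁, measFunctional_apply, hν₁, integral_smul_measure]
      rw [ENNReal.toReal_inv, smul_eq_mul, ← hadef]
      rw [← mul_assoc, mul_inv_cancel₀ (ne_of_gt ha), one_mul]
    have hsmul₂ : ∀ g : C(M, ℝ), bb * φ₂ g = ∫ y in sᶜ, g y ∂μ := by
      intro g
      rw [hφ₂, measFunctional_apply, hν₂, integral_smul_measure]
      rw [ENNReal.toReal_inv, smul_eq_mul, ← hbdef]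
      rw [← mul_assoc, mul_inv_cancel₀ (ne_of_gt hb), one_mul]
    have hdec : ∀ g : C(M, ℝ), ψ g = a * φ₁ g + bb * φ₂ g := by
      intro g
      rw [hsmul₁, hsmul₂, ← hint g]
      exact (integral_add_compl hs (cm_integrable g μ)).symm
    have hdec' : a • φ₁ + bb • φ₂ = ψ := by
      refine DFunLike.ext _ _ fun g => ?_
      have : (a • φ₁ + bb • φ₂) g = a * φ₁ g + bb * φ₂ g := rfl
      rw [this, ← hdec g]
    -- ψ is in the open segment
    have hseg : ψ ∈ openSegment ℝ φ₁ φ₂ := ⟨a, bb, ha, hb, hab, hdec'⟩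
    -- both φᵢ are in F
    have hface : φ₁ ∈ F ∧ φ₂ ∈ F := by
      have h1 : φ₁ fc ≤ c := hmax hφ₁S
      have h2 : φ₂ fc ≤ c := hmax hφ₂S
      have h3 : a * φ₁ fc + bb * φ₂ fc = c := by rw [← hdec fc, hψf]
      have e1 : φ₁ fc = c := by nlinarith
      have e2 : φ₂ fc = c := by nlinarith
      exact ⟨⟨hφ₁S, e1⟩, ⟨hφ₂S, e2⟩⟩
    obtain ⟨heq₁, -⟩ := hψext φ₁ hface.1 φ₂ hface.2 hseg
    -- then μ = ν₁
    have hμν : μ = ν₁ := by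
      refine ext_of_forall_lintegral_eq_of_IsFiniteMeasure fun b => ?_
      set gb : C(M, ℝ) := ⟨fun y => (b y : ℝ), NNReal.continuous_coe.comp b.continuous⟩
      have e1 := lintegral_coe_eq_integral (fun y => b y) (cm_integrable gb μ)
      have e2 := lintegral_coe_eq_integral (fun y => b y) (cm_integrable gb ν₁)
      rw [e1, e2]
      congr 1
      show (∫ y, gb y ∂μ) = ∫ y, gb y ∂ν₁
      have : ∫ y, gb y ∂ν₁ = φ₁ gb := (measFunctional_apply ν₁ gb).symm
      rw [hint gb, this, heq₁]
    have : μ s = 1 := by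
      rw [hμν, hν₁, Measure.smul_apply, Measure.restrict_apply hs, inter_self, smul_eq_mul,
        ENNReal.inv_mul_cancel hne hsfin]
    have hcompl : μ sᶜ = 0 := by
      rw [measure_compl hs hsfin, this]
      simp
    exact hnu hcompl
  refine ⟨μ, hμprob, herg, ?_⟩
  rw [hint fc, hψf]
  exact hc0
end Dual

section Dyn
variable (T : M → M) (x : M) (n : ℕ → ℕ)



noncomputable def avg (T : M → M) (x : M) (n : ℕ → ℕ) (g : C(M, ℝ)) (k : ℕ) : ℝ :=
  (n k : ℝ)⁻¹ * ∑ j ∈ Finset.range (n k), g (T^[j] x)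

lemma abs_avg_le (T : M → M) (x : M) (n : ℕ → ℕ) (g : C(M, ℝ)) (k : ℕ) :
    |avg T x n g k| ≤ ‖g‖ := by
  rcases Nat.eq_zero_or_pos (n k) with h | h
  · simp [avg, h, norm_nonneg]
  · have hsum : |∑ j ∈ Finset.range (n k), g (T^[j] x)| ≤ (n k : ℝ) * ‖g‖ := by
      calc |∑ j ∈ Finset.range (n k), g (T^[j] x)|
          ≤ ∑ j ∈ Finset.range (n k), |g (T^[j] x)| := Finset.abs_sum_le_sum_abs _ _
        _ ≤ ∑ j ∈ Finset.range (n k), ‖g‖ := by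
            refine Finset.sum_le_sum fun j _ => ?_
            exact (abs_le.2 ⟨neg_le_of_neg_le (by
              have := g.norm_coe_le_norm (T^[j] x)
              rw [Real.norm_eq_abs, abs_le] at this; linarith), by
              have := g.norm_coe_le_norm (T^[j] x)
              rw [Real.norm_eq_abs, abs_le] at this; exact this.2⟩)
        _ = (n k : ℝ) * ‖g‖ := by rw [Finset.sum_const, Finset.card_range]; ring
    have hpos : (0:ℝ) < (n k : ℝ) := by exact_mod_cast h
    rw [avg, abs_mul, abs_inv, abs_of_pos hpos]
    calc (n k : ℝ)⁻¹ * |∑ j ∈ Finset.range (n k), g (T^[j] x)|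
        ≤ (n k : ℝ)⁻¹ * ((n k : ℝ) * ‖g‖) := by
          exact mul_le_mul_of_nonneg_left hsum (inv_nonneg.2 hpos.le)
      _ = ‖g‖ := by field_simp


noncomputable def dynU : Ultrafilter ℕ := Ultrafilter.of atTop

lemma dynU_le_atTop : (dynU : Filter ℕ) ≤ atTop := Ultrafilter.of_le _

lemma exists_avg_lim (g : C(M, ℝ)) :
    ∃ a : ℝ, Tendsto (avg T x n g) (dynU : Filter ℕ) (𝓝 a) := by
  have hmem : ∀ k, avg T x n g k ∈ Icc (-‖g‖) ‖g‖ := fun k =>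
    abs_le.1 (abs_avg_le T x n g k)
  have hle : (Ultrafilter.map (avg T x n g) dynU : Filter ℝ) ≤ 𝓟 (Icc (-‖g‖) ‖g‖) := by
    rw [le_principal_iff]
    exact Filter.mem_map.2 (Filter.Eventually.of_forall hmem)
  obtain ⟨a, -, ha⟩ := (isCompact_Icc (a := -‖g‖) (b := ‖g‖)).ultrafilter_le_nhds
    (Ultrafilter.map (avg T x n g) dynU) hle
  exact ⟨a, ha⟩

noncomputable def ell (g : C(M, ℝ)) : ℝ := (exists_avg_lim T x n g).choose

lemma ell_spec (g : C(M, ℝ)) :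
    Tendsto (avg T x n g) (dynU : Filter ℕ) (𝓝 (ell T x n g)) :=
  (exists_avg_lim T x n g).choose_spec

lemma ell_add (g h : C(M, ℝ)) : ell T x n (g + h) = ell T x n g + ell T x n h := by
  have h1 : avg T x n (g + h) = avg T x n g + avg T x n h := by
    funext k
    simp only [avg, Pi.add_apply, ContinuousMap.add_apply, Finset.sum_add_distrib]
    ring
  have h2 : Tendsto (avg T x n (g + h)) (dynU : Filter ℕ)
      (𝓝 (ell T x n g + ell T x n h)) := by
    rw [h1]; exact (ell_spec T x n g).add (ell_spec T x n h)
  exact tendsto_nhds_unique (ell_spec T x n (g + h)) h2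

lemma ell_smul (c : ℝ) (g : C(M, ℝ)) : ell T x n (c • g) = c * ell T x n g := by
  have h1 : avg T x n (c • g) = fun k => c * avg T x n g k := by
    funext k
    simp only [avg, ContinuousMap.smul_apply, smul_eq_mul, ← Finset.mul_sum]
    ring
  have h2 : Tendsto (avg T x n (c • g)) (dynU : Filter ℕ) (𝓝 (c * ell T x n g)) := by
    rw [h1]; exact (ell_spec T x n g).const_mul c
  exact tendsto_nhds_unique (ell_spec T x n (c • g)) h2

lemma ell_nonneg {g : C(M, ℝ)} (hg : ∀ k, 0 ≤ avg T x n g k) : 0 ≤ ell T x n g :=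
  ge_of_tendsto (ell_spec T x n g) (Filter.Eventually.of_forall hg)

lemma ell_abs_le (g : C(M, ℝ)) : |ell T x n g| ≤ ‖g‖ := by
  have : Tendsto (fun k => |avg T x n g k|) (dynU : Filter ℕ) (𝓝 |ell T x n g|) :=
    (ell_spec T x n g).abs
  exact le_of_tendsto this (Filter.Eventually.of_forall fun k => abs_avg_le T x n g k)

lemma ell_pos {g : C(M, ℝ)} (hg : 0 ≤ g) : 0 ≤ ell T x n g := by
  refine ell_nonneg T x n fun k => ?_
  refine mul_nonneg (inv_nonneg.2 (Nat.cast_nonneg _)) (Finset.sum_nonneg fun j _ => hg _)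

lemma ell_one (hn : Tendsto n atTop atTop) : ell T x n 1 = 1 := by
  have h1 : ∀ᶠ k in (dynU : Filter ℕ), avg T x n (1 : C(M, ℝ)) k = 1 := by
    filter_upwards [dynU_le_atTop (hn.eventually_ge_atTop 1)] with k hk
    have hpos : (0:ℝ) < (n k : ℝ) := by exact_mod_cast hk
    simp [avg, Finset.sum_const, Finset.card_range]
    field_simp
  have h2 : Tendsto (avg T x n (1 : C(M, ℝ))) (dynU : Filter ℕ) (𝓝 1) :=
    Tendsto.congr' (Filter.EventuallyEq.symm h1) tendsto_const_nhds
  exact tendsto_nhds_unique (ell_spec T x n 1) h2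

lemma ell_comp (hT : Continuous T) (hn : Tendsto n atTop atTop) (g : C(M, ℝ)) :
    ell T x n (g.comp ⟨T, hT⟩) = ell T x n g := by
  have hdiff : Tendsto (fun k => avg T x n (g.comp ⟨T, hT⟩) k - avg T x n g k)
      atTop (𝓝 0) := by
    have heq : ∀ k, avg T x n (g.comp ⟨T, hT⟩) k - avg T x n g k
        = (n k : ℝ)⁻¹ * (g (T^[n k] x) - g x) := by
      intro k
      have hsum : ∑ j ∈ Finset.range (n k), g (T^[j+1] x)
          - ∑ j ∈ Finset.range (n k), g (T^[j] x) = g (T^[n k] x) - g x := by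
        have h1 : ∑ j ∈ Finset.range (n k + 1), g (T^[j] x)
            = (∑ j ∈ Finset.range (n k), g (T^[j+1] x)) + g (T^[0] x) :=
          Finset.sum_range_succ' (fun j => g (T^[j] x)) (n k)
        have h2 : ∑ j ∈ Finset.range (n k + 1), g (T^[j] x)
            = (∑ j ∈ Finset.range (n k), g (T^[j] x)) + g (T^[n k] x) :=
          Finset.sum_range_succ (fun j => g (T^[j] x)) (n k)
        simp only [Function.iterate_zero_apply] at h1
        linarith
      simp only [avg, ContinuousMap.comp_apply, ContinuousMap.coe_mk]
      have : ∀ j, g (T (T^[j] x)) = g (T^[j+1] x) := fun j => by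
        rw [Function.iterate_succ_apply']
      rw [Finset.sum_congr rfl fun j _ => this j]
      rw [← mul_sub, hsum]
    have hbound : ∀ k, |avg T x n (g.comp ⟨T, hT⟩) k - avg T x n g k|
        ≤ (n k : ℝ)⁻¹ * (2 * ‖g‖) := by
      intro k
      rw [heq k, abs_mul, abs_inv, Nat.abs_cast]
      refine mul_le_mul_of_nonneg_left ?_ (inv_nonneg.2 (Nat.cast_nonneg _))
      have h1 := abs_le.1 ((Real.norm_eq_abs _) ▸ g.norm_coe_le_norm (T^[n k] x))
      have h2 := abs_le.1 ((Real.norm_eq_abs _) ▸ g.norm_coe_le_norm x)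
      rw [abs_le]; constructor <;> [linarith [h1.1, h2.2]; linarith [h1.2, h2.1]]
    have hz : Tendsto (fun k => (n k : ℝ)⁻¹ * (2 * ‖g‖)) atTop (𝓝 0) := by
      have : Tendsto (fun k => (n k : ℝ)⁻¹) atTop (𝓝 0) :=
        tendsto_inv_atTop_zero.comp (tendsto_natCast_atTop_atTop.comp hn)
      simpa using this.mul_const (2 * ‖g‖)
    exact squeeze_zero_norm hbound hz
  have hdiff' : Tendsto (fun k => avg T x n (g.comp ⟨T, hT⟩) k - avg T x n g k)
      (dynU : Filter ℕ) (𝓝 0) := hdiff.mono_left (dynU_le_atTop)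
  have h2 : Tendsto (fun k => avg T x n (g.comp ⟨T, hT⟩) k - avg T x n g k)
      (dynU : Filter ℕ) (𝓝 (ell T x n (g.comp ⟨T, hT⟩) - ell T x n g)) :=
    (ell_spec T x n _).sub (ell_spec T x n g)
  have := tendsto_nhds_unique h2 hdiff'
  linarith [this]
noncomputable def LzeroLin (T : M → M) (x : M) (n : ℕ → ℕ) : C(M, ℝ) →ₗ[ℝ] ℝ where
  toFun := ell T x n
  map_add' := ell_add T x n
  map_smul' := fun c g => by simpa using ell_smul T x n c g

noncomputable def Lzero (T : M → M) (x : M) (n : ℕ → ℕ) : WeakDual ℝ C(M, ℝ) :=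
  StrongDual.toWeakDual (LinearMap.mkContinuous (LzeroLin T x n) 1
    (fun g => by rw [one_mul, Real.norm_eq_abs]; exact ell_abs_le T x n g))

lemma Lzero_apply (T : M → M) (x : M) (n : ℕ → ℕ) (g : C(M, ℝ)) :
    Lzero T x n g = ell T x n g := rfl

lemma Lzero_mem (T : M → M) (x : M) (n : ℕ → ℕ) (hT : Continuous T)
    (hn : Tendsto n atTop atTop) : Lzero T x n ∈ SInv T hT :=
  ⟨fun g hg => ell_pos T x n hg, ell_one T x n hn, fun g => ell_comp T x n hT hn g⟩

end Dyn

end Stmt10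

theorem stmt_10 {M : Type*} [MetricSpace M] [CompactSpace M]
    [MeasurableSpace M] [BorelSpace M]
    (T : M → M) (hT : Continuous T)
    (f : M → ℝ) (hf : Continuous f)
    (x : M) (n : ℕ → ℕ) (hn : Tendsto n atTop atTop)
    (havg : ∀ k : ℕ, 0 ≤ (1 / (n k : ℝ)) *
        ∑ j ∈ Finset.range (n k), f (T^[j] x)) :
    ∃ μ : Measure M, IsProbabilityMeasure μ ∧ Ergodic T μ ∧ 0 ≤ ∫ y, f y ∂μ := by
  classical
  set fc : C(M, ℝ) := ⟨f, hf⟩ with hfc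
  have hL₀f : 0 ≤ Stmt10.Lzero T x n fc := by
    refine Stmt10.ell_nonneg T x n fun k => ?_
    have h := havg k
    rw [one_div] at h
    exact h
  obtain ⟨μ, h1, h2, h3⟩ := Stmt10.exists_ergodic_measure T hT fc (Stmt10.Lzero T x n)
    (Stmt10.Lzero_mem T x n hT hn) hL₀f
  exact ⟨μ, h1, h2, h3⟩
end

section
/- Let E and F be complementary subspaces of a finite-dimensional inner product space V that are orthogonal, and let (A_t)_{t∈ℝ} be a one-parameter group of linear automorphisms of V preserving both E and F. Suppose there are C > 1, λ > 0 such that ‖A_{−t} u‖ / ‖A_{−t} v‖ ≤ C e^{−λ t} for all t > 0 and all unit vectors u ∈ F, v ∈ E. Let L ⊆ F be any line and let π_L : V → L^⊥ be the orthogonal projection; define the induced maps P_t = π_{A_t L} ∘ A_t on L^⊥. Then E ⊆ L^⊥, E is P_t-invariant with P_t|_E = A_t|_E, and the splitting L^⊥ = E ⊕ (F ∩ L^⊥) is dominated for (P_t): ‖P_{−t} u'‖/‖P_{−t} v'‖ ≤ C e^{−λ t} for all unit u' ∈ F ∩ L^⊥, v' ∈ E, t > 0. -/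
open Real RealInnerProductSpace

theorem stmt_13 {V : Type*} [NormedAddCommGroup V] [InnerProductSpace ℝ V]
    [FiniteDimensional ℝ V]
    (E F : Submodule ℝ V) (hcompl : IsCompl E F)
    (horth : ∀ u ∈ E, ∀ v ∈ F, (inner ℝ u v : ℝ) = 0)
    (A : ℝ → V ≃ₗ[ℝ] V)
    (h0 : ∀ v, A 0 v = v)
    (hadd : ∀ t s v, A (t + s) v = A t (A s v))
    (hAE : ∀ t, E.map (A t : V →ₗ[ℝ] V) = E)
    (hAF : ∀ t, F.map (A t : V →ₗ[ℝ] V) = F)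
    (C lam : ℝ) (hC : 1 < C) (hlam : 0 < lam)
    (hdom : ∀ t : ℝ, 0 < t → ∀ u ∈ F, ∀ v ∈ E, ‖u‖ = 1 → ‖v‖ = 1 →
        ‖A (-t) u‖ / ‖A (-t) v‖ ≤ C * Real.exp (-lam * t))
    (L : Submodule ℝ V) (hL : Module.finrank ℝ L = 1) (hLF : L ≤ F)
    (P : ℝ → V → V)
    (hP : ∀ t v, P t v =
        (Submodule.orthogonalProjectionOnto ((L.map ((A t : V →ₗ[ℝ] V)))ᗮ) (A t v) : V)) :
    E ≤ Lᗮ ∧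
    (∀ t : ℝ, ∀ v ∈ E, P t v = A t v ∧ P t v ∈ E) ∧
    (∀ t : ℝ, 0 < t → ∀ u' ∈ F ⊓ Lᗮ, ∀ v' ∈ E, ‖u'‖ = 1 → ‖v'‖ = 1 →
        ‖P (-t) u'‖ / ‖P (-t) v'‖ ≤ C * Real.exp (-lam * t)) := by
  -- A t maps E into E
  have hAE' : ∀ t, ∀ v ∈ E, A t v ∈ E := by
    intro t v hv
    rw [← hAE t]
    exact ⟨v, hv, rfl⟩
  -- key: for v ∈ E, A t v lies in (L.map (A t))ᗮ
  have hkey : ∀ t, ∀ v ∈ E, A t v ∈ (L.map ((A t : V →ₗ[ℝ] V)))ᗮ := by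
    intro t v hv
    rw [Submodule.mem_orthogonal]
    rintro w ⟨l, hl, rfl⟩
    rw [real_inner_comm]
    exact horth _ (hAE' t v hv) _ ((hAF t).le ⟨l, hLF hl, rfl⟩)
  have hP2 : ∀ t : ℝ, ∀ v ∈ E, P t v = A t v ∧ P t v ∈ E := by
    intro t v hv
    have : P t v = A t v := by
      rw [hP]
      exact (Submodule.starProjection_eq_self_iff).2 (hkey t v hv)
    exact ⟨this, this ▸ hAE' t v hv⟩
  refine ⟨?_, hP2, ?_⟩
  · intro v hv
    rw [Submodule.mem_orthogonal]
    intro l hl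
    rw [real_inner_comm]
    exact horth _ hv _ (hLF hl)
  · intro t ht u' hu' v' hv' hu1 hv1
    have hv'E : v' ∈ E := hv'
    have hPv : P (-t) v' = A (-t) v' := (hP2 (-t) v' hv'E).1
    have hvne : (0:ℝ) < ‖A (-t) v'‖ := by
      rw [norm_pos_iff]
      intro h
      have : v' = 0 := (A (-t)).injective (by simpa using h)
      simp [this] at hv1
    have hPu : ‖P (-t) u'‖ ≤ ‖A (-t) u'‖ := by
      rw [hP]
      calc ‖(Submodule.orthogonalProjectionOnto ((L.map ((A (-t) : V →ₗ[ℝ] V)))ᗮ) (A (-t) u') : V)‖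
          ≤ ‖Submodule.orthogonalProjectionOnto ((L.map ((A (-t) : V →ₗ[ℝ] V)))ᗮ)‖ * ‖A (-t) u'‖ :=
            (Submodule.orthogonalProjectionOnto ((L.map ((A (-t) : V →ₗ[ℝ] V)))ᗮ)).le_opNorm _
        _ ≤ 1 * ‖A (-t) u'‖ := by
            gcongr
            exact Submodule.orthogonalProjectionOnto_norm_le _
        _ = ‖A (-t) u'‖ := one_mul _
    calc ‖P (-t) u'‖ / ‖P (-t) v'‖ = ‖P (-t) u'‖ / ‖A (-t) v'‖ := by rw [hPv]
      _ ≤ ‖A (-t) u'‖ / ‖A (-t) v'‖ := by gcongr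
      _ ≤ C * Real.exp (-lam * t) := hdom t ht u' hu'.1 v' hv'E hu1 hv1
end
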